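/- arXiv:2111.12436 — 5 statements merged into one kernel-verified Lean document; each statement's English description precedes it below -/
import Mathlib

section
/- Let P₁, …, P_d be pairwise disjoint subsets of 𝔽₂^d whose transversals are linearly independent, and let R = 𝔽₂^d \ ⋃ᵢ Pᵢ. Then the number of pairs (a,b) with a ∈ Pᵢ, b ∈ Pⱼ, i < j, and a + b ∈ R is at most 2·(maxᵢ |Pᵢ|)·|R|. -/
open Finset

set_option maxHeartbeats 1000000

open scoped Classical in
/-- A partition-matroid reduction of the complete binary matroid `B_d` on `𝔽₂^d`:
pairwise disjoint parts `P i ⊆ 𝔽₂^d` such that every transversal (a set picking at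
most one element from each part) is linearly independent over `𝔽₂`. -/
def TransversalIndep {d : ℕ} (P : Fin d → Finset (Fin d → ZMod 2)) : Prop :=
  Pairwise (fun i j => Disjoint (P i) (P j)) ∧
  ∀ S : Finset (Fin d → ZMod 2),
    (∀ x ∈ S, ∃ i, x ∈ P i) → (∀ i, (S ∩ P i).card ≤ 1) →
    LinearIndependent (ZMod 2) (fun x : {x : Fin d → ZMod 2 // x ∈ S} => (x : Fin d → ZMod 2))

lemma part_eq_of_mem {d : ℕ} {P : Fin d → Finset (Fin d → ZMod 2)}
    (h : Pairwise (fun i j => Disjoint (P i) (P j))) {x : Fin d → ZMod 2} {i j : Fin d}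
    (hx : x ∈ P i) (hy : x ∈ P j) : i = j := by
  by_contra hij
  exact (Finset.disjoint_left.mp (h hij) hx) hy

lemma ne_of_parts {d : ℕ} {P : Fin d → Finset (Fin d → ZMod 2)}
    (h : Pairwise (fun i j => Disjoint (P i) (P j))) {x y : Fin d → ZMod 2} {i j : Fin d}
    (hx : x ∈ P i) (hy : y ∈ P j) (hij : i ≠ j) : x ≠ y := by
  rintro rfl
  exact hij (part_eq_of_mem h hx hy)

lemma self_add_self {d : ℕ} (x : Fin d → ZMod 2) : x + x = 0 := by
  funext k
  exact CharTwo.add_self_eq_zero _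

open scoped Classical in
/-- Key counting lemma: for each fixed `r`, the number of `a` with `a ∈ P i`,
`a + r ∈ P j` for some `i < j` is at most twice the maximum part size. -/
lemma key_count {d : ℕ} (P : Fin d → Finset (Fin d → ZMod 2)) (h : TransversalIndep P)
    (r : Fin d → ZMod 2) :
    (Finset.univ.filter (fun a : Fin d → ZMod 2 =>
        ∃ i j : Fin d, i < j ∧ a ∈ P i ∧ a + r ∈ P j)).card
      ≤ 2 * (Finset.univ.sup fun i => (P i).card) := by
  set A := Finset.univ.filter (fun a : Fin d → ZMod 2 =>
      ∃ i j : Fin d, i < j ∧ a ∈ P i ∧ a + r ∈ P j) with hA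
  rcases A.eq_empty_or_nonempty with he | ⟨a₀, ha₀⟩
  · simp [he]
  obtain ⟨i₀, j₀, hij₀, ha₀i, ha₀j⟩ := (Finset.mem_filter.mp ha₀).2
  -- Every representation's index pair meets {i₀, j₀}
  have claim : ∀ a ∈ A, ∀ i j : Fin d, i < j → a ∈ P i → a + r ∈ P j →
      (i = i₀ ∨ i = j₀ ∨ j = i₀ ∨ j = j₀) := by
    intro a _ i j hij hai haj
    by_contra hc
    push_neg at hc
    obtain ⟨hii₀, hij₀', hji₀, hjj₀⟩ := hc
    -- index distinctness
    have nij : i ≠ j := ne_of_lt hij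
    have ni₀j₀ : i₀ ≠ j₀ := ne_of_lt hij₀
    -- element distinctness
    have e1 : a ≠ a + r := ne_of_parts h.1 hai haj nij
    have e2 : a ≠ a₀ := ne_of_parts h.1 hai ha₀i hii₀
    have e3 : a ≠ a₀ + r := ne_of_parts h.1 hai ha₀j hij₀'
    have e4 : a + r ≠ a₀ := ne_of_parts h.1 haj ha₀i hji₀
    have e5 : a + r ≠ a₀ + r := ne_of_parts h.1 haj ha₀j hjj₀
    have e6 : a₀ ≠ a₀ + r := ne_of_parts h.1 ha₀i ha₀j ni₀j₀
    set S : Finset (Fin d → ZMod 2) := {a, a + r, a₀, a₀ + r} with hS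
    have hmemS : ∀ x ∈ S, ∀ k, x ∈ P k →
        (x = a ∧ k = i) ∨ (x = a + r ∧ k = j) ∨ (x = a₀ ∧ k = i₀) ∨ (x = a₀ + r ∧ k = j₀) := by
      intro x hx k hxk
      simp only [hS, Finset.mem_insert, Finset.mem_singleton] at hx
      rcases hx with rfl | rfl | rfl | rfl
      · exact Or.inl ⟨rfl, part_eq_of_mem h.1 hxk hai⟩
      · exact Or.inr (Or.inl ⟨rfl, part_eq_of_mem h.1 hxk haj⟩)
      · exact Or.inr (Or.inr (Or.inl ⟨rfl, part_eq_of_mem h.1 hxk ha₀i⟩))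
      · exact Or.inr (Or.inr (Or.inr ⟨rfl, part_eq_of_mem h.1 hxk ha₀j⟩))
    have cond1 : ∀ x ∈ S, ∃ k, x ∈ P k := by
      intro x hx
      simp only [hS, Finset.mem_insert, Finset.mem_singleton] at hx
      rcases hx with rfl | rfl | rfl | rfl
      exacts [⟨i, hai⟩, ⟨j, haj⟩, ⟨i₀, ha₀i⟩, ⟨j₀, ha₀j⟩]
    have cond2 : ∀ k, (S ∩ P k).card ≤ 1 := by
      intro k
      apply Finset.card_le_one.mpr
      intro x hx y hy
      rw [Finset.mem_inter] at hx hy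
      rcases hmemS x hx.1 k hx.2 with ⟨rfl, rfl⟩ | ⟨rfl, rfl⟩ | ⟨rfl, rfl⟩ | ⟨rfl, rfl⟩ <;>
        rcases hmemS y hy.1 _ hy.2 with ⟨rfl, hk⟩ | ⟨rfl, hk⟩ | ⟨rfl, hk⟩ | ⟨rfl, hk⟩ <;>
          first
          | rfl
          | (exact absurd hk (by tauto))
    have li := h.2 S cond1 cond2
    rw [Fintype.linearIndependent_iff] at li
    have hsum : (∑ x : {x : Fin d → ZMod 2 // x ∈ S},
        (1 : ZMod 2) • (x : Fin d → ZMod 2)) = 0 := by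
      simp only [one_smul]
      rw [Finset.sum_coe_sort S (fun x => x)]
      have : (∑ x ∈ S, x) = a + (a + r + (a₀ + (a₀ + r))) := by
        rw [hS]
        rw [Finset.sum_insert (by simp [e1, e2, e3]),
          Finset.sum_insert (by simp [e4, e5]),
          Finset.sum_insert (by simp [e6]), Finset.sum_singleton]
      rw [this]
      have : a + (a + r + (a₀ + (a₀ + r))) = (a + a) + ((a₀ + a₀) + (r + r)) := by abel
      rw [this, self_add_self, self_add_self, self_add_self]
      simp
    have := li (fun _ => 1) hsum ⟨a, by simp [hS]⟩
    exact one_ne_zero this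
  -- Injection from A into P i₀ ∪ P j₀
  have hinj : A.card ≤ (P i₀ ∪ P j₀).card := by
    apply Finset.card_le_card_of_injOn (fun a => if a ∈ P i₀ ∪ P j₀ then a else a + r)
    · intro a ha
      by_cases hu : a ∈ P i₀ ∪ P j₀
      · show (if a ∈ P i₀ ∪ P j₀ then a else a + r) ∈ P i₀ ∪ P j₀; exact if_pos hu ▸ hu
      · simp only [hu, if_false]
        obtain ⟨i, j, hij, hai, haj⟩ := (Finset.mem_filter.mp ha).2
        rcases claim a ha i j hij hai haj with rfl | rfl | rfl | rfl
        · exact absurd (Finset.mem_union_left _ hai) hu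
        · exact absurd (Finset.mem_union_right _ hai) hu
        · exact Finset.mem_union_left _ haj
        · exact Finset.mem_union_right _ haj
    · intro a ha b hb hab
      simp only at hab
      by_cases hua : a ∈ P i₀ ∪ P j₀ <;> by_cases hub : b ∈ P i₀ ∪ P j₀
      · simpa [hua, hub] using hab
      · -- a = b + r
        rw [if_pos hua, if_neg hub] at hab
        exfalso
        obtain ⟨i, j, hij, hai, haj⟩ := (Finset.mem_filter.mp ha).2
        obtain ⟨i', j', hij', hbi, hbj⟩ := (Finset.mem_filter.mp hb).2
        have h1 : i = j' := part_eq_of_mem h.1 hai (hab ▸ hbj)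
        have h2 : a + r = b := by rw [hab, add_assoc, self_add_self, add_zero]
        have h3 : j = i' := part_eq_of_mem h.1 haj (h2 ▸ hbi)
        have hx : i < i' := by rw [← h3]; exact hij
        have hy : i' < i := by rw [← h1] at hij'; exact hij'
        exact absurd (hx.trans hy) (lt_irrefl i)
      · -- b = a + r : symmetric
        rw [if_neg hua, if_pos hub] at hab
        exfalso
        obtain ⟨i, j, hij, hai, haj⟩ := (Finset.mem_filter.mp ha).2
        obtain ⟨i', j', hij', hbi, hbj⟩ := (Finset.mem_filter.mp hb).2
        have h1 : i' = j := part_eq_of_mem h.1 hbi (hab.symm ▸ haj)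
        have h2 : b + r = a := by rw [← hab, add_assoc, self_add_self, add_zero]
        have h3 : j' = i := part_eq_of_mem h.1 hbj (h2 ▸ hai)
        have hx : i' < i := by rw [← h3]; exact hij'
        have hy : i < i' := by rw [← h1] at hij; exact hij
        exact absurd (hx.trans hy) (lt_irrefl i')
      · rw [if_neg hua, if_neg hub] at hab
        exact add_right_cancel hab
  calc A.card ≤ (P i₀ ∪ P j₀).card := hinj
    _ ≤ (P i₀).card + (P j₀).card := Finset.card_union_le _ _
    _ ≤ (Finset.univ.sup fun i => (P i).card) + (Finset.univ.sup fun i => (P i).card) :=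
        Nat.add_le_add (Finset.le_sup (f := fun i => (P i).card) (Finset.mem_univ i₀))
          (Finset.le_sup (f := fun i => (P i).card) (Finset.mem_univ j₀))
    _ = 2 * (Finset.univ.sup fun i => (P i).card) := (two_mul _).symm

open scoped Classical in
theorem stmt1 {d : ℕ} (P : Fin d → Finset (Fin d → ZMod 2)) (h : TransversalIndep P)
    (R : Finset (Fin d → ZMod 2)) (hR : R = Finset.univ.filter (fun x => ∀ i, x ∉ P i)) :
    ((Finset.univ ×ˢ Finset.univ).filter (fun p : (Fin d → ZMod 2) × (Fin d → ZMod 2) =>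
        ∃ i j : Fin d, i < j ∧ p.1 ∈ P i ∧ p.2 ∈ P j ∧ p.1 + p.2 ∈ R)).card
      ≤ 2 * (Finset.univ.sup fun i => (P i).card) * R.card := by
  classical
  set A : (Fin d → ZMod 2) → Finset (Fin d → ZMod 2) := fun r =>
    Finset.univ.filter (fun a : Fin d → ZMod 2 =>
      ∃ i j : Fin d, i < j ∧ a ∈ P i ∧ a + r ∈ P j) with hAdef
  have step1 : ((Finset.univ ×ˢ Finset.univ).filter
      (fun p : (Fin d → ZMod 2) × (Fin d → ZMod 2) =>
        ∃ i j : Fin d, i < j ∧ p.1 ∈ P i ∧ p.2 ∈ P j ∧ p.1 + p.2 ∈ R)).card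
      ≤ (R.sigma A).card := by
    apply Finset.card_le_card_of_injOn (fun p => ⟨p.1 + p.2, p.1⟩)
    · intro p hp
      obtain ⟨i, j, hij, h1, h2, h3⟩ := (Finset.mem_filter.mp hp).2
      rw [Finset.mem_coe, Finset.mem_sigma]
      refine ⟨h3, ?_⟩
      rw [hAdef]
      simp only [Finset.mem_filter, Finset.mem_univ, true_and]
      refine ⟨i, j, hij, h1, ?_⟩
      have : p.1 + (p.1 + p.2) = p.2 := by
        rw [← add_assoc, self_add_self, zero_add]
      rw [this]
      exact h2
    · intro p hp q hq hpq
      simp only [Sigma.mk.inj_iff, heq_eq_eq] at hpq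
      obtain ⟨h1, h2⟩ := hpq
      have : p.2 = q.2 := by
        have := h1
        rw [h2] at this
        exact add_left_cancel this
      exact Prod.ext h2 this
  have step2 : (R.sigma A).card ≤ R.card * (2 * (Finset.univ.sup fun i => (P i).card)) := by
    rw [Finset.card_sigma]
    calc (∑ r ∈ R, (A r).card)
        ≤ ∑ _r ∈ R, 2 * (Finset.univ.sup fun i => (P i).card) :=
          Finset.sum_le_sum (fun r _ => key_count P h r)
      _ = R.card * (2 * (Finset.univ.sup fun i => (P i).card)) := by
          rw [Finset.sum_const, smul_eq_mul]
  calc _ ≤ (R.sigma A).card := step1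
    _ ≤ R.card * (2 * (Finset.univ.sup fun i => (P i).card)) := step2
    _ = 2 * (Finset.univ.sup fun i => (P i).card) * R.card := by ring
end

section
/- Let P₁,…,P_d be pairwise disjoint subsets of 𝔽₂^d whose transversals are linearly independent over 𝔽₂, with total size n = ∑ᵢ |Pᵢ| = c·2^d for some 0 < c ≤ 1. Then some part Pᵢ satisfies |Pᵢ| > (c/8)·n. -/
open Finset

open scoped Classical in
/-- If four elements lie in four pairwise distinct parts, the sums of the two pairs differ
(otherwise the four elements would form a dependent transversal). -/
lemma four_sum_ne {d : ℕ} (P : Fin d → Finset (Fin d → ZMod 2)) (h : TransversalIndep P)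
    {i j k l : Fin d} (hij : i ≠ j) (hik : i ≠ k) (hil : i ≠ l) (hjk : j ≠ k)
    (hjl : j ≠ l) (hkl : k ≠ l)
    {x y u w : Fin d → ZMod 2} (hx : x ∈ P i) (hy : y ∈ P j) (hu : u ∈ P k) (hw : w ∈ P l) :
    x + y ≠ u + w := by
  intro heq
  obtain ⟨hdisj, hindep⟩ := h
  have uniq : ∀ (v : Fin d → ZMod 2) (a b : Fin d), v ∈ P a → v ∈ P b → a = b := by
    intro v a b ha hb
    by_contra hab
    exact (Finset.disjoint_left.mp (hdisj hab)) ha hb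
  have dxy : x ≠ y := fun e => hij (uniq x i j hx (e ▸ hy))
  have dxu : x ≠ u := fun e => hik (uniq x i k hx (e ▸ hu))
  have dxw : x ≠ w := fun e => hil (uniq x i l hx (e ▸ hw))
  have dyu : y ≠ u := fun e => hjk (uniq y j k hy (e ▸ hu))
  have dyw : y ≠ w := fun e => hjl (uniq y j l hy (e ▸ hw))
  have duw : u ≠ w := fun e => hkl (uniq u k l hu (e ▸ hw))
  set S : Finset (Fin d → ZMod 2) := {x, y, u, w} with hS
  have hxy : x ∈ S := by simp [hS]
  have hS1 : ∀ v ∈ S, ∃ m, v ∈ P m := by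
    intro v hv
    simp only [hS, Finset.mem_insert, Finset.mem_singleton] at hv
    rcases hv with rfl | rfl | rfl | rfl
    exacts [⟨i, hx⟩, ⟨j, hy⟩, ⟨k, hu⟩, ⟨l, hw⟩]
  have hS2 : ∀ m, (S ∩ P m).card ≤ 1 := by
    intro m
    rw [Finset.card_le_one]
    intro a ha b hb
    rw [Finset.mem_inter] at ha hb
    obtain ⟨haS, haP⟩ := ha
    obtain ⟨hbS, hbP⟩ := hb
    simp only [hS, Finset.mem_insert, Finset.mem_singleton] at haS hbS
    rcases haS with rfl | rfl | rfl | rfl <;> rcases hbS with rfl | rfl | rfl | rfl <;>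
      first
        | rfl
        | (exfalso;
           first
            | exact hij ((uniq _ _ _ hx haP).trans (uniq _ _ _ hy hbP).symm)
            | exact hik ((uniq _ _ _ hx haP).trans (uniq _ _ _ hu hbP).symm)
            | exact hil ((uniq _ _ _ hx haP).trans (uniq _ _ _ hw hbP).symm)
            | exact hjk ((uniq _ _ _ hy haP).trans (uniq _ _ _ hu hbP).symm)
            | exact hjl ((uniq _ _ _ hy haP).trans (uniq _ _ _ hw hbP).symm)
            | exact hkl ((uniq _ _ _ hu haP).trans (uniq _ _ _ hw hbP).symm)
            | exact hij ((uniq _ _ _ hx hbP).trans (uniq _ _ _ hy haP).symm)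
            | exact hik ((uniq _ _ _ hx hbP).trans (uniq _ _ _ hu haP).symm)
            | exact hil ((uniq _ _ _ hx hbP).trans (uniq _ _ _ hw haP).symm)
            | exact hjk ((uniq _ _ _ hy hbP).trans (uniq _ _ _ hu haP).symm)
            | exact hjl ((uniq _ _ _ hy hbP).trans (uniq _ _ _ hw haP).symm)
            | exact hkl ((uniq _ _ _ hu hbP).trans (uniq _ _ _ hw haP).symm))
  have li := hindep S hS1 hS2
  have hsum : ∑ v ∈ S, v = 0 := by
    rw [hS]
    rw [Finset.sum_insert (by simp [dxy, dxu, dxw]),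
        Finset.sum_insert (by simp [dyu, dyw]),
        Finset.sum_insert (by simp [duw]), Finset.sum_singleton]
    rw [← add_assoc, heq]
    ext t
    simp [CharTwo.add_self_eq_zero]
  have := Fintype.linearIndependent_iff.mp li (fun _ => 1) ?_ ⟨x, hxy⟩
  · exact one_ne_zero this
  · rw [show (fun v : {v // v ∈ S} => (1 : ZMod 2) • (v : Fin d → ZMod 2))
        = fun v : {v // v ∈ S} => (v : Fin d → ZMod 2) from funext fun v => one_smul _ _]
    rw [Finset.sum_coe_sort S (fun v => v)]
    exact hsum

open scoped Classical in
/-- All cross pairs with a fixed sum `z` have first coordinate in a union of at most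
four translates of parts, hence the fiber has size at most `4 * M`. -/
lemma fiber_bound {d : ℕ} (P : Fin d → Finset (Fin d → ZMod 2)) (h : TransversalIndep P)
    (M : ℕ) (hM : ∀ i, (P i).card ≤ M) (z : Fin d → ZMod 2) :
    (((univ.filter fun p : Fin d × Fin d => p.1 ≠ p.2).sigma
        fun p => P p.1 ×ˢ P p.2).filter fun q => q.2.1 + q.2.2 = z).card ≤ 4 * M := by
  classical
  have uniq : ∀ (v : Fin d → ZMod 2) (a b : Fin d), v ∈ P a → v ∈ P b → a = b := by
    intro v a b ha hb
    by_contra hab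
    exact (Finset.disjoint_left.mp (h.1 hab)) ha hb
  set F := ((univ.filter fun p : Fin d × Fin d => p.1 ≠ p.2).sigma
        fun p => P p.1 ×ˢ P p.2).filter fun q => q.2.1 + q.2.2 = z with hF
  have hFmem : ∀ q : (_ : Fin d × Fin d) × ((Fin d → ZMod 2) × (Fin d → ZMod 2)),
      q ∈ F ↔ (q.1.1 ≠ q.1.2 ∧ q.2.1 ∈ P q.1.1 ∧ q.2.2 ∈ P q.1.2) ∧ q.2.1 + q.2.2 = z := by
    intro q
    simp [hF, Finset.mem_sigma, Finset.mem_product, and_assoc]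
  rcases F.eq_empty_or_nonempty with he | ⟨⟨⟨a, b⟩, x₀, y₀⟩, hq₀⟩
  · simp [he]
  rw [hFmem] at hq₀
  obtain ⟨⟨hab, hx₀, hy₀⟩, hz₀⟩ := hq₀
  set A := P a ∪ P b ∪ (P a).image (· + z) ∪ (P b).image (· + z) with hA
  have hAcard : A.card ≤ 4 * M := by
    have h1 := Finset.card_union_le (P a ∪ P b ∪ (P a).image (· + z)) ((P b).image (· + z))
    have h2 := Finset.card_union_le (P a ∪ P b) ((P a).image (· + z))
    have h3 := Finset.card_union_le (P a) (P b)
    have h4 := Finset.card_image_le (s := P a) (f := (· + z))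
    have h5 := Finset.card_image_le (s := P b) (f := (· + z))
    have ha' := hM a; have hb' := hM b
    rw [hA]
    omega
  refine le_trans (Finset.card_le_card_of_injOn (fun q => q.2.1) ?_ ?_) hAcard
  · rintro ⟨⟨i, j⟩, x, y⟩ hq
    rw [Finset.mem_coe, hFmem] at hq
    obtain ⟨⟨hij, hx, hy⟩, hxyz⟩ := hq
    have key : i = a ∨ i = b ∨ j = a ∨ j = b := by
      by_contra hk
      push_neg at hk
      obtain ⟨h1, h2, h3, h4⟩ := hk
      exact four_sum_ne P h hij h1 h2 h3 h4 hab hx hy hx₀ hy₀ (hxyz.trans hz₀.symm)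
    have hyzx : y + z = x := by
      rw [← hxyz]
      ext t
      simp only [Pi.add_apply]
      calc y t + (x t + y t) = x t + (y t + y t) := by ring
        _ = x t := by rw [CharTwo.add_self_eq_zero, add_zero]
    simp only [hA, Finset.mem_coe, Finset.mem_union, Finset.mem_image]
    rcases key with rfl | rfl | rfl | rfl
    · exact Or.inl (Or.inl (Or.inl hx))
    · exact Or.inl (Or.inl (Or.inr hx))
    · exact Or.inl (Or.inr ⟨y, hy, hyzx⟩)
    · exact Or.inr ⟨y, hy, hyzx⟩
  · rintro ⟨⟨i, j⟩, x, y⟩ hq ⟨⟨i', j'⟩, x', y'⟩ hq' hee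
    simp only [Finset.mem_coe] at hq hq'
    rw [hFmem] at hq hq'
    obtain ⟨⟨hij, hx, hy⟩, hxyz⟩ := hq
    obtain ⟨⟨hij', hx', hy'⟩, hxyz'⟩ := hq'
    simp only at hee
    subst hee
    have hyy : y = y' := add_left_cancel (hxyz.trans hxyz'.symm)
    subst hyy
    have hii : i = i' := uniq x i i' hx hx'
    have hjj : j = j' := uniq y j j' hy hy'
    subst hii; subst hjj; rfl

open scoped Classical in
/-- The double-counting inequality: `n² ≤ 2^d · 4M + M·n`. -/
lemma count_ineq {d : ℕ} (P : Fin d → Finset (Fin d → ZMod 2)) (h : TransversalIndep P)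
    (n : ℕ) (hn : n = ∑ i, (P i).card) (M : ℕ) (hM : ∀ i, (P i).card ≤ M) :
    n ^ 2 ≤ 2 ^ d * (4 * M) + M * n := by
  classical
  set T := (univ.filter fun p : Fin d × Fin d => p.1 ≠ p.2).sigma
      fun p => P p.1 ×ˢ P p.2 with hT
  have hTcard : T.card = ∑ p ∈ univ.filter fun p : Fin d × Fin d => p.1 ≠ p.2,
      (P p.1).card * (P p.2).card := by
    rw [hT, Finset.card_sigma]
    exact Finset.sum_congr rfl fun p _ => Finset.card_product _ _
  have htotal : ∑ p : Fin d × Fin d, (P p.1).card * (P p.2).card = n ^ 2 := by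
    rw [← Finset.univ_product_univ, Finset.sum_product]
    simp only [← Finset.sum_mul, ← Finset.mul_sum, ← hn]
    ring
  have hdiagsum : ∑ p ∈ univ.filter (fun p : Fin d × Fin d => ¬ p.1 ≠ p.2),
      (P p.1).card * (P p.2).card ≤ M * n := by
    have himg : univ.filter (fun p : Fin d × Fin d => ¬ p.1 ≠ p.2)
        = univ.image (fun i : Fin d => (i, i)) := by
      ext ⟨a, b⟩
      simp [eq_comm, Prod.ext_iff]
    rw [himg, Finset.sum_image (by intro a _ b _ e; simpa [Prod.ext_iff] using e)]
    calc ∑ i : Fin d, (P i).card * (P i).card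
        ≤ ∑ i : Fin d, M * (P i).card :=
          Finset.sum_le_sum fun i _ => Nat.mul_le_mul_right _ (hM i)
      _ = M * n := by rw [← Finset.mul_sum, hn]
  have hsplit : T.card + ∑ p ∈ univ.filter (fun p : Fin d × Fin d => ¬ p.1 ≠ p.2),
      (P p.1).card * (P p.2).card = n ^ 2 := by
    rw [hTcard, Finset.sum_filter_add_sum_filter_not]
    exact htotal
  have hfiber : T.card = ∑ z : Fin d → ZMod 2,
      (T.filter fun q => q.2.1 + q.2.2 = z).card :=
    Finset.card_eq_sum_card_fiberwise (fun q _ => Finset.mem_univ _)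
  have hTle : T.card ≤ 2 ^ d * (4 * M) := by
    rw [hfiber]
    calc ∑ z : Fin d → ZMod 2, (T.filter fun q => q.2.1 + q.2.2 = z).card
        ≤ ∑ _z : Fin d → ZMod 2, 4 * M :=
          Finset.sum_le_sum fun z _ => fiber_bound P h M hM z
      _ = 2 ^ d * (4 * M) := by
          rw [Finset.sum_const, Finset.card_univ]
          simp [Fintype.card_fun]
  omega

theorem stmt4 {d : ℕ} (P : Fin d → Finset (Fin d → ZMod 2)) (h : TransversalIndep P)
    (n : ℕ) (c : ℝ) (hn : n = ∑ i, (P i).card)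
    (hc : 0 < c) (hc1 : c ≤ 1) (hcn : (n : ℝ) = c * 2 ^ d) :
    ∃ i, ((P i).card : ℝ) > (c / 8) * n := by
  classical
  have h2d : (0 : ℝ) < 2 ^ d := by positivity
  have hnpos : 0 < n := by
    rcases Nat.eq_zero_or_pos n with h0 | h0
    · exfalso
      rw [h0] at hcn
      push_cast at hcn
      nlinarith
    · exact h0
  have hne : (univ : Finset (Fin d)).Nonempty := by
    by_contra he
    rw [Finset.not_nonempty_iff_eq_empty] at he
    rw [he, Finset.sum_empty] at hn
    omega
  obtain ⟨i₀, -, hmax⟩ := Finset.exists_max_image univ (fun i => (P i).card) hne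
  set M := (P i₀).card with hMdef
  have hM : ∀ i, (P i).card ≤ M := fun i => hmax i (Finset.mem_univ i)
  have hcount := count_ineq P h n hn M hM
  refine ⟨i₀, ?_⟩
  have hcountR : (n : ℝ) ^ 2 ≤ 2 ^ d * (4 * M) + M * n := by exact_mod_cast hcount
  have hnle : (n : ℝ) ≤ 2 ^ d := by nlinarith
  have hMnn : (0 : ℝ) ≤ (M : ℝ) := Nat.cast_nonneg _
  have hnR : (0 : ℝ) < n := by exact_mod_cast hnpos
  rw [← hMdef]
  nlinarith [mul_le_mul_of_nonneg_left hnle hMnn, mul_pos (mul_pos hc hnR) h2d,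
    mul_pos hc hnR]
end

section
/- Let P₁,…,P_d be pairwise disjoint subsets of 𝔽₂^d whose transversals are linearly independent over 𝔽₂ and with maxᵢ |Pᵢ| ≤ cn/8, where n = ∑ᵢ|Pᵢ| = c·2^d. Construct a directed graph on ⋃ᵢPᵢ with an edge (a,b) for each cross-part pair a ∈ Pᵢ, b ∈ Pⱼ (i ≠ j) with a+b ∈ Pᵢ ∪ Pⱼ, directed toward the element in the part containing a+b. Then every vertex has in-degree at most maxᵢ|Pᵢ|, so the number of such pairs is at most n·maxᵢ|Pᵢ|. -/
open Finset

open scoped Classical in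
theorem stmt12 {d : ℕ} (P : Fin d → Finset (Fin d → ZMod 2)) (h : TransversalIndep P)
    (n : ℕ) (c : ℝ) (hn : n = ∑ i, (P i).card) (hc : 0 < c) (hc1 : c ≤ 1)
    (hcn : (n : ℝ) = c * 2 ^ d) (hmax : ∀ i, ((P i).card : ℝ) ≤ c * n / 8) :
    (∀ v : Fin d → ZMod 2,
      (((Finset.univ ×ˢ Finset.univ).filter
          (fun p : (Fin d → ZMod 2) × (Fin d → ZMod 2) =>
            (∃ i j : Fin d, i < j ∧ p.1 ∈ P i ∧ p.2 ∈ P j ∧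
              (p.1 + p.2 ∈ P i ∨ p.1 + p.2 ∈ P j)) ∧
            ((p.1 = v ∧ ∃ i, p.1 ∈ P i ∧ p.1 + p.2 ∈ P i) ∨
             (p.2 = v ∧ ∃ j, p.2 ∈ P j ∧ p.1 + p.2 ∈ P j)))).card
        ≤ Finset.univ.sup fun i => (P i).card))
    ∧ ((Finset.univ ×ˢ Finset.univ).filter
          (fun p : (Fin d → ZMod 2) × (Fin d → ZMod 2) =>
            ∃ i j : Fin d, i < j ∧ p.1 ∈ P i ∧ p.2 ∈ P j ∧
              (p.1 + p.2 ∈ P i ∨ p.1 + p.2 ∈ P j))).card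
        ≤ n * Finset.univ.sup fun i => (P i).card := by
  obtain ⟨hdisj, -⟩ := h
  have uniq : ∀ {x : Fin d → ZMod 2} {a b : Fin d}, x ∈ P a → x ∈ P b → a = b := by
    intro x a b ha hb
    by_contra hne
    exact (Finset.disjoint_left.mp (hdisj hne) ha) hb
  have key : ∀ v : Fin d → ZMod 2,
      (((Finset.univ ×ˢ Finset.univ).filter
          (fun p : (Fin d → ZMod 2) × (Fin d → ZMod 2) =>
            (∃ i j : Fin d, i < j ∧ p.1 ∈ P i ∧ p.2 ∈ P j ∧
              (p.1 + p.2 ∈ P i ∨ p.1 + p.2 ∈ P j)) ∧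
            ((p.1 = v ∧ ∃ i, p.1 ∈ P i ∧ p.1 + p.2 ∈ P i) ∨
             (p.2 = v ∧ ∃ j, p.2 ∈ P j ∧ p.1 + p.2 ∈ P j)))).card
        ≤ Finset.univ.sup fun i => (P i).card) := by
    intro v
    set S := ((Finset.univ ×ˢ Finset.univ).filter
          (fun p : (Fin d → ZMod 2) × (Fin d → ZMod 2) =>
            (∃ i j : Fin d, i < j ∧ p.1 ∈ P i ∧ p.2 ∈ P j ∧
              (p.1 + p.2 ∈ P i ∨ p.1 + p.2 ∈ P j)) ∧
            ((p.1 = v ∧ ∃ i, p.1 ∈ P i ∧ p.1 + p.2 ∈ P i) ∨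
             (p.2 = v ∧ ∃ j, p.2 ∈ P j ∧ p.1 + p.2 ∈ P j)))) with hS
    rcases S.eq_empty_or_nonempty with hE | ⟨p₀, hp₀⟩
    · simp [hE]
    -- v belongs to some part P k
    obtain ⟨k, hvk⟩ : ∃ k, v ∈ P k := by
      have := (Finset.mem_filter.mp hp₀).2.2
      rcases this with ⟨h1, i, hi, -⟩ | ⟨h2, j, hj, -⟩
      · exact ⟨i, h1 ▸ hi⟩
      · exact ⟨j, h2 ▸ hj⟩
    have hmap : ∀ p ∈ S, p.1 + p.2 ∈ P k := by
      intro p hp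
      rcases (Finset.mem_filter.mp hp).2.2 with ⟨h1, i, hi, hs⟩ | ⟨h2, j, hj, hs⟩
      · have : i = k := uniq (h1 ▸ hi) hvk
        exact this ▸ hs
      · have : j = k := uniq (h2 ▸ hj) hvk
        exact this ▸ hs
    have hinj : Set.InjOn (fun p : (Fin d → ZMod 2) × (Fin d → ZMod 2) => p.1 + p.2) S := by
      intro p hp q hq heq
      simp only at heq
      obtain ⟨-, ⟨i, j, hij, hpi, hpj, -⟩, hcp⟩ :=
        Finset.mem_filter.mp hp
      obtain ⟨-, ⟨a, b, hab, hqa, hqb, -⟩, hcq⟩ :=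
        Finset.mem_filter.mp hq
      rcases hcp with ⟨hp1, i', hi', -⟩ | ⟨hp2, j', hj', -⟩ <;>
        rcases hcq with ⟨hq1, a', ha', -⟩ | ⟨hq2, b', hb', -⟩
      · -- both heads are first coordinates: p.1 = v = q.1
        have h1 : p.1 = q.1 := hp1.trans hq1.symm
        have h2 : p.2 = q.2 := by
          rw [h1] at heq; exact add_left_cancel heq
        exact Prod.ext h1 h2
      · -- p.1 = v, q.2 = v
        exfalso
        have hx : p.2 = q.1 := by
          rw [hp1, hq2, add_comm q.1 v] at heq
          exact add_left_cancel heq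
        have hik : i = k := uniq (hp1 ▸ hpi) hvk
        have hbk : b = k := uniq (hq2 ▸ hqb) hvk
        -- p.2 ∈ P j with j > k, and p.2 = q.1 ∈ P a with a < k
        have hja : j = a := uniq hpj (hx ▸ hqa)
        omega
      · -- p.2 = v, q.1 = v
        exfalso
        have hx : p.1 = q.2 := by
          rw [hp2, hq1, add_comm v q.2] at heq
          exact add_right_cancel heq
        have hjk : j = k := uniq (hp2 ▸ hpj) hvk
        have hak : a = k := uniq (hq1 ▸ hqa) hvk
        have hib : i = b := uniq hpi (hx ▸ hqb)
        omega
      · -- both tails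
        have h2 : p.2 = q.2 := hp2.trans hq2.symm
        have h1 : p.1 = q.1 := by
          rw [h2] at heq; exact add_right_cancel heq
        exact Prod.ext h1 h2
    calc S.card ≤ (P k).card := Finset.card_le_card_of_injOn _ hmap hinj
      _ ≤ Finset.univ.sup fun i => (P i).card := Finset.le_sup (f := fun i => (P i).card) (mem_univ k)
  refine ⟨key, ?_⟩
  set V : Finset (Fin d → ZMod 2) := Finset.univ.biUnion P with hV
  set Sv : (Fin d → ZMod 2) → Finset ((Fin d → ZMod 2) × (Fin d → ZMod 2)) :=
    fun v => ((Finset.univ ×ˢ Finset.univ).filter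
          (fun p : (Fin d → ZMod 2) × (Fin d → ZMod 2) =>
            (∃ i j : Fin d, i < j ∧ p.1 ∈ P i ∧ p.2 ∈ P j ∧
              (p.1 + p.2 ∈ P i ∨ p.1 + p.2 ∈ P j)) ∧
            ((p.1 = v ∧ ∃ i, p.1 ∈ P i ∧ p.1 + p.2 ∈ P i) ∨
             (p.2 = v ∧ ∃ j, p.2 ∈ P j ∧ p.1 + p.2 ∈ P j)))) with hSv
  have hsub : ((Finset.univ ×ˢ Finset.univ).filter
          (fun p : (Fin d → ZMod 2) × (Fin d → ZMod 2) =>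
            ∃ i j : Fin d, i < j ∧ p.1 ∈ P i ∧ p.2 ∈ P j ∧
              (p.1 + p.2 ∈ P i ∨ p.1 + p.2 ∈ P j))) ⊆ V.biUnion Sv := by
    intro p hp
    obtain ⟨hmem, i, j, hij, h1, h2, hor⟩ := Finset.mem_filter.mp hp
    rcases hor with hs | hs
    · refine Finset.mem_biUnion.mpr ⟨p.1, Finset.mem_biUnion.mpr ⟨i, mem_univ i, h1⟩, ?_⟩
      exact Finset.mem_filter.mpr ⟨hmem, ⟨i, j, hij, h1, h2, Or.inl hs⟩,
        Or.inl ⟨rfl, i, h1, hs⟩⟩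
    · refine Finset.mem_biUnion.mpr ⟨p.2, Finset.mem_biUnion.mpr ⟨j, mem_univ j, h2⟩, ?_⟩
      exact Finset.mem_filter.mpr ⟨hmem, ⟨i, j, hij, h1, h2, Or.inr hs⟩,
        Or.inr ⟨rfl, j, h2, hs⟩⟩
  calc ((Finset.univ ×ˢ Finset.univ).filter
          (fun p : (Fin d → ZMod 2) × (Fin d → ZMod 2) =>
            ∃ i j : Fin d, i < j ∧ p.1 ∈ P i ∧ p.2 ∈ P j ∧
              (p.1 + p.2 ∈ P i ∨ p.1 + p.2 ∈ P j))).card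
      ≤ (V.biUnion Sv).card := Finset.card_le_card hsub
    _ ≤ ∑ v ∈ V, (Sv v).card := Finset.card_biUnion_le
    _ ≤ ∑ _v ∈ V, (Finset.univ.sup fun i => (P i).card) :=
        Finset.sum_le_sum fun v _ => key v
    _ = V.card * (Finset.univ.sup fun i => (P i).card) := by
        rw [Finset.sum_const, smul_eq_mul]
    _ ≤ n * (Finset.univ.sup fun i => (P i).card) := by
        refine Nat.mul_le_mul_right _ ?_
        rw [hn]
        exact Finset.card_biUnion_le
end

section
/- For d ≥ 17, any partition of 𝔽₂^d \ {0} into parts P₁,…,P_d such that transversals are linearly independent over 𝔽₂ has covering number maxᵢ|Pᵢ| ≥ (2^d−1)/8 > 2·⌈(2^d−1)/d⌉. -/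
open Finset

theorem stmt15 {d : ℕ} (hd : 17 ≤ d) (P : Fin d → Finset (Fin d → ZMod 2))
    (h : TransversalIndep P)
    (hcover : ∀ x : Fin d → ZMod 2, x ≠ 0 ↔ ∃ i, x ∈ P i) :
    ((Finset.univ.sup fun i => (P i).card : ℕ) : ℝ) ≥ ((2 : ℝ) ^ d - 1) / 8 ∧
    ((2 : ℝ) ^ d - 1) / 8 > 2 * (⌈((2 : ℝ) ^ d - 1) / d⌉₊ : ℝ) := by
  classical
  obtain ⟨hdisj, hind⟩ := h
  have hd0 : 0 < d := by omega
  -- basic char-2 facts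
  have hself : ∀ v : (Fin d → ZMod 2), v + v = 0 := by
    intro v; funext i
    have : ∀ a : ZMod 2, a + a = 0 := by decide
    exact this (v i)
  have hsum_ne : ∀ x y : (Fin d → ZMod 2), x ≠ y → x + y ≠ 0 := by
    intro x y hxy h0
    apply hxy
    have : x = -y := add_eq_zero_iff_eq_neg.mp h0
    rw [this, neg_eq_of_add_eq_zero_left (hself y)]
  -- the color function
  have ccolor : ∀ x : (Fin d → ZMod 2), x ≠ 0 → ∃ i, x ∈ P i := fun x hx => (hcover x).mp hx
  set c : (Fin d → ZMod 2) → Fin d := fun x =>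
    if hx : x ≠ 0 then (ccolor x hx).choose else ⟨0, hd0⟩ with hc
  have cmem : ∀ x : (Fin d → ZMod 2), x ≠ 0 → x ∈ P (c x) := by
    intro x hx
    simp only [hc, dif_pos hx]
    exact (ccolor x hx).choose_spec
  have cuniq : ∀ (x : (Fin d → ZMod 2)) (i : Fin d), x ≠ 0 → x ∈ P i → c x = i := by
    intro x i hx hxi
    by_contra hne
    exact Finset.disjoint_left.mp (hdisj hne) (cmem x hx) hxi
  -- key structural lemma
  have key : ∀ x y : (Fin d → ZMod 2), x ≠ 0 → y ≠ 0 → c x ≠ c y →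
      c (x + y) = c x ∨ c (x + y) = c y := by
    intro x y hx hy hcxy
    have hxy : x ≠ y := fun e => hcxy (by rw [e])
    have hz : x + y ≠ 0 := hsum_ne x y hxy
    by_contra hcon
    push_neg at hcon
    obtain ⟨h1, h2⟩ := hcon
    have hxz : x ≠ x + y := by
      intro e; apply hy; have := congrArg (fun v => x + v) (hself x)
      calc y = x + (x + y) := by rw [← add_assoc, hself x, zero_add]
        _ = x + x := by rw [← e]
        _ = 0 := hself x
    have hyz : y ≠ x + y := by
      intro e; apply hx
      calc x = (x + y) + y := by rw [add_assoc, hself y, add_zero]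
        _ = y + y := by rw [← e]
        _ = 0 := hself y
    set S : Finset (Fin d → ZMod 2) := {x, y, x + y} with hS
    have hmemx : x ∈ S := by simp [hS]
    have hmemS : ∀ z ∈ S, z ≠ 0 := by
      intro z hz'
      simp only [hS, mem_insert, mem_singleton] at hz'
      rcases hz' with rfl | rfl | rfl <;> assumption
    have cond1 : ∀ z ∈ S, ∃ i, z ∈ P i := fun z hz' => ⟨c z, cmem z (hmemS z hz')⟩
    have hcz : ∀ z ∈ S, z ∈ P (c z) := fun z hz' => cmem z (hmemS z hz')
    have cond2 : ∀ i, (S ∩ P i).card ≤ 1 := by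
      intro i
      apply Finset.card_le_one.mpr
      intro a ha b hb
      obtain ⟨haS, haP⟩ := Finset.mem_inter.mp ha
      obtain ⟨hbS, hbP⟩ := Finset.mem_inter.mp hb
      have hca : c a = i := cuniq a i (hmemS a haS) haP
      have hcb : c b = i := cuniq b i (hmemS b hbS) hbP
      have hcab : c a = c b := by rw [hca, hcb]
      simp only [hS, mem_insert, mem_singleton] at haS hbS
      rcases haS with rfl | rfl | rfl <;> rcases hbS with rfl | rfl | rfl <;>
        first
          | rfl
          | (exact absurd hcab hcxy)
          | (exact absurd hcab.symm hcxy)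
          | (exact absurd hcab.symm h1)
          | (exact absurd hcab h1)
          | (exact absurd hcab.symm h2)
          | (exact absurd hcab h2)
    have hli := hind S cond1 cond2
    rw [Fintype.linearIndependent_iff] at hli
    have hsum : ∑ i : {z : (Fin d → ZMod 2) // z ∈ S}, (fun _ => (1 : ZMod 2)) i • (i : (Fin d → ZMod 2)) = 0 := by
      simp only [one_smul]
      rw [Finset.sum_coe_sort S (fun z : (Fin d → ZMod 2) => z)]
      have : S = {x, y, x + y} := hS
      rw [this]
      rw [Finset.sum_insert (by simp [hxy, hxz]), Finset.sum_insert (by simp [hyz]),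
        Finset.sum_singleton]
      calc x + (y + (x + y)) = (x + x) + (y + y) := by abel
        _ = 0 := by rw [hself, hself, add_zero]
    have := hli (fun _ => (1 : ZMod 2)) hsum ⟨x, hmemx⟩
    exact one_ne_zero this
  -- the counting
  set M : ℕ := Finset.univ.sup fun i => (P i).card with hM
  have hMle : ∀ i, (P i).card ≤ M := by
    intro i; rw [hM]; exact Finset.le_sup (f := fun i => (P i).card) (Finset.mem_univ i)
  set Ω : Finset (Fin d → ZMod 2) := Finset.univ.erase 0 with hΩ
  have memΩ : ∀ z : (Fin d → ZMod 2), z ∈ Ω ↔ z ≠ 0 := by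
    intro z; simp [hΩ]
  have hcardV : Fintype.card (Fin d → ZMod 2) = 2 ^ d := by
    rw [Fintype.card_fun, ZMod.card, Fintype.card_fin]
  have hΩcard : Ω.card = 2 ^ d - 1 := by
    rw [hΩ, Finset.card_erase_of_mem (Finset.mem_univ 0), Finset.card_univ, hcardV]
  set T : Finset ((Fin d → ZMod 2) × (Fin d → ZMod 2)) := Ω.offDiag with hT
  have hTcard : T.card = Ω.card * Ω.card - Ω.card := by rw [hT]; exact Finset.offDiag_card (s := Ω)
  have memT : ∀ p : (Fin d → ZMod 2) × (Fin d → ZMod 2), p ∈ T ↔ p.1 ∈ Ω ∧ p.2 ∈ Ω ∧ p.1 ≠ p.2 := by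
    intro p; exact Finset.mem_offDiag
  set Teq : Finset ((Fin d → ZMod 2) × (Fin d → ZMod 2)) := T.filter (fun p => c p.1 = c p.2) with hTeq
  set Tneq : Finset ((Fin d → ZMod 2) × (Fin d → ZMod 2)) := T.filter (fun p => ¬ c p.1 = c p.2) with hTneq
  -- Step A : Teq.card ≤ M * Ω.card
  have stepA : Teq.card ≤ M * Ω.card := by
    apply Finset.card_le_mul_card_image_of_maps_to
      (f := Prod.fst) (t := Ω)
    · intro p hp
      exact ((memT p).mp (Finset.mem_filter.mp hp).1).1
    · intro b hb
      calc (Teq.filter (fun p => p.1 = b)).card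
          ≤ (P (c b)).card := by
            apply Finset.card_le_card_of_injOn (fun p => p.2)
            · intro p hp
              obtain ⟨hp1, hp2⟩ := Finset.mem_filter.mp hp
              obtain ⟨hpT, hpc⟩ := Finset.mem_filter.mp hp1
              have h2 : p.2 ≠ 0 := (memΩ p.2).mp ((memT p).mp hpT).2.1
              have : c p.2 = c b := by rw [← hpc, hp2]
              rw [← this]
              exact cmem p.2 h2
            · intro p hp q hq hpq
              obtain ⟨_, hp2⟩ := Finset.mem_filter.mp hp
              obtain ⟨_, hq2⟩ := Finset.mem_filter.mp hq
              exact Prod.ext (by rw [hp2, hq2]) hpq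
        _ ≤ M := hMle _
  -- Step B : Tneq.card ≤ 2 * Teq.card
  have stepB : Tneq.card ≤ 2 * Teq.card := by
    set f : (Fin d → ZMod 2) × (Fin d → ZMod 2) → (Fin d → ZMod 2) × (Fin d → ZMod 2) := fun p =>
      if c (p.1 + p.2) = c p.1 then (p.1, p.1 + p.2) else (p.2, p.1 + p.2) with hf
    apply Finset.card_le_mul_card_image_of_maps_to (f := f) (t := Teq)
    · intro p hp
      obtain ⟨hpT, hpc⟩ := Finset.mem_filter.mp hp
      obtain ⟨hp1, hp2, hp12⟩ := (memT p).mp hpT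
      have hx : p.1 ≠ 0 := (memΩ p.1).mp hp1
      have hy : p.2 ≠ 0 := (memΩ p.2).mp hp2
      have hzne : p.1 + p.2 ≠ 0 := hsum_ne p.1 p.2 hp12
      have hzΩ : p.1 + p.2 ∈ Ω := (memΩ _).mpr hzne
      have hkey := key p.1 p.2 hx hy hpc
      by_cases hcase : c (p.1 + p.2) = c p.1
      · have : f p = (p.1, p.1 + p.2) := by simp only [hf, if_pos hcase]
        rw [this]
        apply Finset.mem_filter.mpr
        constructor
        · apply (memT _).mpr
          refine ⟨hp1, hzΩ, ?_⟩
          show p.1 ≠ p.1 + p.2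
          intro e
          apply hy
          calc p.2 = p.1 + (p.1 + p.2) := by
                rw [← add_assoc, hself p.1, zero_add]
            _ = p.1 + p.1 := by rw [← e]
            _ = 0 := hself p.1
        · exact hcase.symm
      · have hcy : c (p.1 + p.2) = c p.2 := hkey.resolve_left hcase
        have : f p = (p.2, p.1 + p.2) := by simp only [hf, if_neg hcase]
        rw [this]
        apply Finset.mem_filter.mpr
        constructor
        · apply (memT _).mpr
          refine ⟨hp2, hzΩ, ?_⟩
          show p.2 ≠ p.1 + p.2
          intro e
          apply hx
          calc p.1 = (p.1 + p.2) + p.2 := by rw [add_assoc, hself p.2, add_zero]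
            _ = p.2 + p.2 := by rw [← e]
            _ = 0 := hself p.2
        · exact hcy.symm
    · intro b _
      have hsub : (Tneq.filter (fun p => f p = b)) ⊆
          {(b.1, b.1 + b.2), (b.1 + b.2, b.1)} := by
        intro p hp
        obtain ⟨_, hpf⟩ := Finset.mem_filter.mp hp
        simp only [Finset.mem_insert, Finset.mem_singleton]
        simp only [hf] at hpf
        by_cases hcase : c (p.1 + p.2) = c p.1
        · simp only [if_pos hcase] at hpf
          left
          have hb1 : b.1 = p.1 := by rw [← hpf]
          have hb2 : b.2 = p.1 + p.2 := by rw [← hpf]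
          have : b.1 + b.2 = p.2 := by
            rw [hb1, hb2, ← add_assoc, hself p.1, zero_add]
          exact Prod.ext hb1.symm this.symm
        · simp only [if_neg hcase] at hpf
          right
          have hb1 : b.1 = p.2 := by rw [← hpf]
          have hb2 : b.2 = p.1 + p.2 := by rw [← hpf]
          have : b.1 + b.2 = p.1 := by
            rw [hb1, hb2]
            calc p.2 + (p.1 + p.2) = p.1 + (p.2 + p.2) := by abel
              _ = p.1 := by rw [hself, add_zero]
          exact Prod.ext this.symm hb1.symm
      calc (Tneq.filter (fun p => f p = b)).card
          ≤ ({(b.1, b.1 + b.2), (b.1 + b.2, b.1)} : Finset ((Fin d → ZMod 2) × (Fin d → ZMod 2))).card :=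
            Finset.card_le_card hsub
        _ ≤ 2 := Finset.card_insert_le _ _ |>.trans (by simp)
  -- combine
  have hsplit : Teq.card + Tneq.card = T.card :=
    Finset.card_filter_add_card_filter_not _
  have hmain : Ω.card * Ω.card - Ω.card ≤ 3 * (M * Ω.card) := by
    rw [← hTcard, ← hsplit]
    omega
  have hn1 : 1 ≤ Ω.card := by
    rw [hΩcard]
    have : 2 ^ 17 ≤ 2 ^ d := Nat.pow_le_pow_right (by norm_num) hd
    omega
  have hstep : Ω.card - 1 ≤ 3 * M := by
    have h1 : Ω.card * (Ω.card - 1) ≤ (3 * M) * Ω.card := by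
      calc Ω.card * (Ω.card - 1) = Ω.card * Ω.card - Ω.card := by
            rw [Nat.mul_sub_one]
        _ ≤ 3 * (M * Ω.card) := hmain
        _ = (3 * M) * Ω.card := by ring
    have h2 : Ω.card * (Ω.card - 1) ≤ Ω.card * (3 * M) := by
      rw [mul_comm (3 * M) Ω.card] at h1; exact h1
    exact Nat.le_of_mul_le_mul_left h2 hn1
  have hM1 : 1 ≤ M := by
    have hxne : (fun _ => (1 : ZMod 2) : (Fin d → ZMod 2)) ≠ 0 := by
      intro e
      have := congrFun e ⟨0, hd0⟩
      simpa using this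
    obtain ⟨i, hi⟩ := (hcover _).mp hxne
    calc 1 ≤ (P i).card := Finset.card_pos.mpr ⟨_, hi⟩
      _ ≤ M := hMle i
  have hfinal : 2 ^ d - 1 ≤ 8 * M := by
    rw [← hΩcard]; omega
  -- transfer to the reals
  have hpow : (1 : ℕ) ≤ 2 ^ d := Nat.one_le_two_pow
  have hcast : ((2 : ℝ) ^ d - 1) = ((2 ^ d - 1 : ℕ) : ℝ) := by
    push_cast [hpow]; ring
  have h2d : (131072 : ℝ) ≤ (2 : ℝ) ^ d := by
    calc (131072 : ℝ) = 2 ^ 17 := by norm_num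
      _ ≤ 2 ^ d := by
        apply pow_le_pow_right₀ (by norm_num) hd
  constructor
  · rw [ge_iff_le, div_le_iff₀ (by norm_num : (0:ℝ) < 8), hcast]
    calc ((2 ^ d - 1 : ℕ) : ℝ) ≤ ((8 * M : ℕ) : ℝ) := by exact_mod_cast hfinal
      _ = (M : ℝ) * 8 := by push_cast; ring
  · have hdR : (17 : ℝ) ≤ (d : ℝ) := by exact_mod_cast hd
    set x : ℝ := (2 : ℝ) ^ d - 1 with hx
    have hx0 : (131071 : ℝ) ≤ x := by rw [hx]; linarith
    have hxpos : (0 : ℝ) ≤ x := by linarith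
    have hceil : (⌈x / d⌉₊ : ℝ) < x / d + 1 :=
      Nat.ceil_lt_add_one (by positivity)
    have hdiv : x / d ≤ x / 17 :=
      div_le_div_of_nonneg_left hxpos (by norm_num) hdR
    have : x / 8 ≥ 2 * (x / 17 + 1) := by
      rw [ge_iff_le]
      nlinarith
    linarith
end

section
/- Let P₁,…,P_d be a partition matroid reduction of B_d with ∑ᵢ|Pᵢ| ≥ 2^d/d^{1/4}. Then maxᵢ |Pᵢ| ≥ 2^d/(8√d). -/
open Finset

theorem stmt18 {d : ℕ} (hd : 1 ≤ d) (P : Fin d → Finset (Fin d → ZMod 2))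
    (h : TransversalIndep P)
    (hbig : ((∑ i, (P i).card : ℕ) : ℝ) ≥ 2 ^ d / (d : ℝ) ^ ((1 : ℝ) / 4)) :
    ∃ i, ((P i).card : ℝ) ≥ 2 ^ d / (8 * Real.sqrt d) := by
  classical
  obtain ⟨hdisj, hind⟩ := h
  have huniq : ∀ {x : Fin d → ZMod 2} {a b : Fin d}, x ∈ P a → x ∈ P b → a = b := by
    intro x a b ha hb
    by_contra hne
    exact Finset.disjoint_left.mp (hdisj hne) ha hb
  -- key: no 4-element cross relation
  have key : ∀ (x y x' y' : Fin d → ZMod 2) (i j i' j' : Fin d),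
      x ∈ P i → y ∈ P j → x' ∈ P i' → y' ∈ P j' → i ≠ j → i' ≠ j' →
      x ∉ P i' → x ∉ P j' → y ∉ P i' → y ∉ P j' →
      x + y = x' + y' → False := by
    intro x y x' y' i j i' j' hx hy hx' hy' hij hij' hxn1 hxn2 hyn1 hyn2 hsum
    have hii' : i ≠ i' := fun e => hxn1 (e ▸ hx)
    have hijp : i ≠ j' := fun e => hxn2 (e ▸ hx)
    have hji' : j ≠ i' := fun e => hyn1 (e ▸ hy)
    have hjj' : j ≠ j' := fun e => hyn2 (e ▸ hy)
    have hne : ∀ {u v : Fin d → ZMod 2} {a b : Fin d}, u ∈ P a → v ∈ P b → a ≠ b → u ≠ v :=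
      fun hu hv hab e => hab (huniq (e ▸ hu) hv)
    have nxy := hne hx hy hij
    have nxx' := hne hx hx' hii'
    have nxy' := hne hx hy' hijp
    have nyx' := hne hy hx' hji'
    have nyy' := hne hy hy' hjj'
    have nx'y' := hne hx' hy' hij'
    set T : Finset (Fin d → ZMod 2) := {x, y, x', y'} with hT
    have cover : ∀ v ∈ T, ∃ k, v ∈ P k := by
      intro v hv
      simp only [hT, Finset.mem_insert, Finset.mem_singleton] at hv
      rcases hv with rfl|rfl|rfl|rfl
      exacts [⟨i, hx⟩, ⟨j, hy⟩, ⟨i', hx'⟩, ⟨j', hy'⟩]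
    have bad : ∀ {u v : Fin d → ZMod 2} {pa pb k : Fin d}, u ∈ P pa → v ∈ P pb → pa ≠ pb →
        u ∈ P k → v ∈ P k → u = v :=
      fun hu hv hab hu' hv' => (hab ((huniq hu hu').trans (huniq hv' hv))).elim
    have cardc : ∀ k, (T ∩ P k).card ≤ 1 := by
      intro k
      rw [Finset.card_le_one]
      intro a ha b hb
      simp only [hT, Finset.mem_inter, Finset.mem_insert, Finset.mem_singleton] at ha hb
      obtain ⟨hA, haP⟩ := ha
      obtain ⟨hB, hbP⟩ := hb
      rcases hA with rfl|rfl|rfl|rfl <;> rcases hB with rfl|rfl|rfl|rfl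
      · rfl
      · exact bad hx hy hij haP hbP
      · exact bad hx hx' hii' haP hbP
      · exact bad hx hy' hijp haP hbP
      · exact bad hy hx hij.symm haP hbP
      · rfl
      · exact bad hy hx' hji' haP hbP
      · exact bad hy hy' hjj' haP hbP
      · exact bad hx' hx hii'.symm haP hbP
      · exact bad hx' hy hji'.symm haP hbP
      · rfl
      · exact bad hx' hy' hij' haP hbP
      · exact bad hy' hx hijp.symm haP hbP
      · exact bad hy' hy hjj'.symm haP hbP
      · exact bad hy' hx' hij'.symm haP hbP
      · rfl
    have hli := hind T cover cardc
    have hadd : ∀ u : Fin d → ZMod 2, u + u = 0 := by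
      intro u; funext k
      have h2 : ∀ a : ZMod 2, a + a = 0 := by decide
      simpa using h2 (u k)
    have hsum0 : ∑ v : {v // v ∈ T}, (1 : ZMod 2) • (v : Fin d → ZMod 2) = 0 := by
      simp only [one_smul]
      rw [Finset.sum_coe_sort T (fun v => v)]
      have hTsum : ∑ v ∈ T, v = x + (y + (x' + y')) := by
        rw [hT, Finset.sum_insert (by simp [nxy, nxx', nxy']),
            Finset.sum_insert (by simp [nyx', nyy']),
            Finset.sum_pair nx'y']
      rw [hTsum]
      calc x + (y + (x' + y')) = (x + y) + (x' + y') := by ring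
        _ = (x' + y') + (x' + y') := by rw [hsum]
        _ = 0 := hadd _
    have hx_mem : x ∈ T := by simp [hT]
    have := Fintype.linearIndependent_iff.mp hli (fun _ => 1) hsum0 ⟨x, hx_mem⟩
    exact one_ne_zero this
  -- max part
  have hne : (Finset.univ : Finset (Fin d)).Nonempty := ⟨⟨0, hd⟩, Finset.mem_univ _⟩
  obtain ⟨imax, -, hmax⟩ := Finset.exists_max_image (Finset.univ : Finset (Fin d))
    (fun i => (P i).card) hne
  set m := (P imax).card with hm_def
  have hm : ∀ i, (P i).card ≤ m := fun i => hmax i (Finset.mem_univ i)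
  set A : Finset (Fin d → ZMod 2) := Finset.univ.biUnion P with hA_def
  have hScard : A.card = ∑ i, (P i).card :=
    Finset.card_biUnion (fun i _ j _ hij => hdisj hij)
  set B : Finset ((Fin d → ZMod 2) × (Fin d → ZMod 2)) :=
    Finset.univ.biUnion (fun i => P i ×ˢ P i) with hB_def
  set E : Finset ((Fin d → ZMod 2) × (Fin d → ZMod 2)) := (A ×ˢ A) \ B with hE_def
  have hsub : B ⊆ A ×ˢ A := by
    intro p hp
    simp only [hB_def, Finset.mem_biUnion, Finset.mem_product] at hp
    obtain ⟨i, -, h1, h2⟩ := hp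
    simp only [Finset.mem_product, hA_def, Finset.mem_biUnion]
    exact ⟨⟨i, Finset.mem_univ _, h1⟩, ⟨i, Finset.mem_univ _, h2⟩⟩
  have hBcard : B.card = ∑ i, (P i).card ^ 2 := by
    rw [hB_def, Finset.card_biUnion]
    · simp [Finset.card_product, sq]
    · intro i _ j _ hij
      unfold Function.onFun
      rw [Finset.disjoint_left]
      intro p hp1 hp2
      simp only [Finset.mem_product] at hp1 hp2
      exact Finset.disjoint_left.mp (hdisj hij) hp1.1 hp2.1
  have hEcard : E.card + ∑ i, (P i).card ^ 2 =
      (∑ i, (P i).card) * (∑ i, (P i).card) := by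
    rw [← hBcard, hE_def, Finset.card_sdiff_add_card_eq_card hsub, Finset.card_product, hScard]
  have hfibers : E.card = ∑ s : (Fin d → ZMod 2), (E.filter (fun p => p.1 + p.2 = s)).card :=
    Finset.card_eq_sum_card_fiberwise (fun p _ => Finset.mem_univ _)
  have hfib : ∀ s : Fin d → ZMod 2, (E.filter (fun p => p.1 + p.2 = s)).card ≤ 4 * m := by
    intro s
    set F := E.filter (fun p => p.1 + p.2 = s) with hF
    rcases F.eq_empty_or_nonempty with he | ⟨⟨x₀, y₀⟩, hp₀⟩
    · simp [he]
    have hp₀' := hp₀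
    simp only [hF, Finset.mem_filter, hE_def, Finset.mem_sdiff, Finset.mem_product,
      hB_def, Finset.mem_biUnion] at hp₀'
    obtain ⟨⟨⟨hx₀A, hy₀A⟩, hnot⟩, hs₀⟩ := hp₀'
    push_neg at hnot
    simp only [Finset.mem_product, Finset.mem_univ, true_implies] at hnot
    simp only [hA_def, Finset.mem_biUnion] at hx₀A hy₀A
    obtain ⟨a, -, hxa⟩ := hx₀A
    obtain ⟨b, -, hyb⟩ := hy₀A
    have hab : a ≠ b := by
      intro e
      exact hnot a hxa (e ▸ hyb)
    have hclaim : ∀ p ∈ F, p.1 ∈ P a ∪ P b ∨ p.2 ∈ P a ∪ P b := by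
      intro p hp
      by_contra hcon
      push_neg at hcon
      obtain ⟨h1, h2⟩ := hcon
      simp only [Finset.mem_union, not_or] at h1 h2
      have hp' := hp
      simp only [hF, Finset.mem_filter, hE_def, Finset.mem_sdiff, Finset.mem_product,
        hB_def, Finset.mem_biUnion] at hp'
      obtain ⟨⟨⟨hpA, hqA⟩, hpnot⟩, hps⟩ := hp'
      push_neg at hpnot
      simp only [Finset.mem_product, Finset.mem_univ, true_implies] at hpnot
      simp only [hA_def, Finset.mem_biUnion] at hpA hqA
      obtain ⟨i, -, hpi⟩ := hpA
      obtain ⟨j, -, hqj⟩ := hqA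
      have hij : i ≠ j := by
        intro e
        exact hpnot i hpi (e ▸ hqj)
      exact key p.1 p.2 x₀ y₀ i j a b hpi hqj hxa hyb hij hab h1.1 h1.2 h2.1 h2.2
        (hps.trans hs₀.symm)
    have hsplit : F ⊆ F.filter (fun p => p.1 ∈ P a ∪ P b) ∪ F.filter (fun p => p.2 ∈ P a ∪ P b) := by
      intro p hp
      rcases hclaim p hp with hc | hc
      · exact Finset.mem_union_left _ (Finset.mem_filter.mpr ⟨hp, hc⟩)
      · exact Finset.mem_union_right _ (Finset.mem_filter.mpr ⟨hp, hc⟩)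
    have hsum_of_mem : ∀ p ∈ F, p.1 + p.2 = s := fun p hp => (Finset.mem_filter.mp hp).2
    have c1 : (F.filter (fun p => p.1 ∈ P a ∪ P b)).card ≤ (P a ∪ P b).card := by
      apply Finset.card_le_card_of_injOn Prod.fst
      · intro p hp; exact (Finset.mem_filter.mp hp).2
      · intro p hp q hq hpq
        have e1 := hsum_of_mem p (Finset.mem_filter.mp hp).1
        have e2 := hsum_of_mem q (Finset.mem_filter.mp hq).1
        have : p.2 = q.2 := by
          have : p.1 + p.2 = q.1 + q.2 := by rw [e1, e2]
          rw [hpq] at this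
          exact add_left_cancel this
        exact Prod.ext hpq this
    have c2 : (F.filter (fun p => p.2 ∈ P a ∪ P b)).card ≤ (P a ∪ P b).card := by
      apply Finset.card_le_card_of_injOn Prod.snd
      · intro p hp; exact (Finset.mem_filter.mp hp).2
      · intro p hp q hq hpq
        have e1 := hsum_of_mem p (Finset.mem_filter.mp hp).1
        have e2 := hsum_of_mem q (Finset.mem_filter.mp hq).1
        have : p.1 = q.1 := by
          have h3 : p.1 + p.2 = q.1 + q.2 := by rw [e1, e2]
          rw [hpq] at h3
          exact add_right_cancel h3
        exact Prod.ext this hpq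
    have hQ : (P a ∪ P b).card ≤ 2 * m := by
      calc (P a ∪ P b).card ≤ (P a).card + (P b).card := Finset.card_union_le _ _
        _ ≤ m + m := Nat.add_le_add (hm a) (hm b)
        _ = 2 * m := by ring
    calc F.card ≤ (F.filter (fun p => p.1 ∈ P a ∪ P b) ∪ F.filter (fun p => p.2 ∈ P a ∪ P b)).card :=
          Finset.card_le_card hsplit
      _ ≤ (F.filter (fun p => p.1 ∈ P a ∪ P b)).card + (F.filter (fun p => p.2 ∈ P a ∪ P b)).card :=
          Finset.card_union_le _ _
      _ ≤ (P a ∪ P b).card + (P a ∪ P b).card := Nat.add_le_add c1 c2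
      _ ≤ 2 * m + 2 * m := Nat.add_le_add hQ hQ
      _ = 4 * m := by ring
  have hVcard : Fintype.card (Fin d → ZMod 2) = 2 ^ d := by
    simp [ZMod.card]
  have hSle : ∑ i, (P i).card ≤ 2 ^ d := by
    calc ∑ i, (P i).card = A.card := hScard.symm
      _ ≤ Fintype.card (Fin d → ZMod 2) := Finset.card_le_univ _
      _ = 2 ^ d := hVcard
  have hsq_le : ∑ i, (P i).card ^ 2 ≤ m * ∑ i, (P i).card := by
    rw [Finset.mul_sum]
    apply Finset.sum_le_sum
    intro i _
    calc (P i).card ^ 2 = (P i).card * (P i).card := sq ((P i).card)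
      _ ≤ m * (P i).card := Nat.mul_le_mul_right _ (hm i)
  have hEle : E.card ≤ 2 ^ d * (4 * m) := by
    rw [hfibers]
    calc ∑ s : (Fin d → ZMod 2), (E.filter (fun p => p.1 + p.2 = s)).card
        ≤ ∑ _s : (Fin d → ZMod 2), 4 * m := Finset.sum_le_sum (fun s _ => hfib s)
      _ = Fintype.card (Fin d → ZMod 2) * (4 * m) := by
          rw [Finset.sum_const, smul_eq_mul, Finset.card_univ]
      _ = 2 ^ d * (4 * m) := by rw [hVcard]
  have hkey : (∑ i, (P i).card) * (∑ i, (P i).card) ≤ 5 * m * 2 ^ d := by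
    calc (∑ i, (P i).card) * (∑ i, (P i).card) = E.card + ∑ i, (P i).card ^ 2 := hEcard.symm
      _ ≤ 2 ^ d * (4 * m) + m * ∑ i, (P i).card := Nat.add_le_add hEle hsq_le
      _ ≤ 2 ^ d * (4 * m) + m * 2 ^ d := Nat.add_le_add_left (Nat.mul_le_mul_left _ hSle) _
      _ = 5 * m * 2 ^ d := by ring
  -- now real arithmetic
  refine ⟨imax, ?_⟩
  have hdpos : (0 : ℝ) < (d : ℝ) := by exact_mod_cast Nat.lt_of_lt_of_le Nat.zero_lt_one hd
  have ht : (0 : ℝ) < (d : ℝ) ^ ((1 : ℝ) / 4) := Real.rpow_pos_of_pos hdpos _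
  have hsq : ((d : ℝ) ^ ((1 : ℝ) / 4)) ^ (2 : ℕ) = Real.sqrt d := by
    rw [← Real.rpow_natCast ((d : ℝ) ^ ((1 : ℝ) / 4)) 2, ← Real.rpow_mul hdpos.le,
      Real.sqrt_eq_rpow]
    norm_num
  have hD : (0 : ℝ) < 2 ^ d := by positivity
  have hsqrtpos : (0 : ℝ) < Real.sqrt d := Real.sqrt_pos.mpr hdpos
  rw [ge_iff_le, div_le_iff₀ (by positivity)]
  rw [← hsq]
  set t : ℝ := (d : ℝ) ^ ((1 : ℝ) / 4) with htdef
  set S' : ℝ := ((∑ i, (P i).card : ℕ) : ℝ) with hS'def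
  have h1 : (2 : ℝ) ^ d ≤ S' * t := by
    rw [ge_iff_le, div_le_iff₀ ht] at hbig
    exact hbig
  have hc : S' * S' ≤ 5 * (m : ℝ) * 2 ^ d := by
    rw [hS'def]
    exact_mod_cast hkey
  have hS'nonneg : (0 : ℝ) ≤ S' := Nat.cast_nonneg _
  have h2 : (2 : ℝ) ^ d * (2 : ℝ) ^ d ≤ (S' * S') * (t * t) := by nlinarith
  have h3 : (S' * S') * (t * t) ≤ (5 * (m : ℝ) * (t * t)) * 2 ^ d := by nlinarith
  have h4 : (2 : ℝ) ^ d * (2 : ℝ) ^ d ≤ (5 * (m : ℝ) * (t * t)) * 2 ^ d := le_trans h2 h3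
  have h5 : (2 : ℝ) ^ d ≤ 5 * (m : ℝ) * (t * t) := (mul_le_mul_iff_of_pos_right hD).mp h4
  have hmnonneg : (0 : ℝ) ≤ (m : ℝ) := Nat.cast_nonneg _
  nlinarith [mul_nonneg hmnonneg (mul_self_nonneg t)]
end
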